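/- If a module M_R is (σ,δ)-compatible and reduced, then it satisfies condition (*): for any m(x) ∈ M[x;σ,δ] and f(x) ∈ R[x;σ,δ], m(x)f(x) = 0 implies m(x)·r·f(x) = 0 for all r ∈ R. -/
import Mathlib


open MulOpposite

/-- `fw σ δ i j` is `f_i^j`, the sum of all words in `σ`, `δ` built with `i` factors of `σ`
and `j - i` factors of `δ`. -/
def fw {R : Type*} [Ring R] (σ δ : R → R) : ℕ → ℕ → R → R
  | 0, 0 => id
  | _ + 1, 0 => fun _ => 0
  | 0, j + 1 => fun a => δ (fw σ δ 0 j a)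
  | i + 1, j + 1 => fun a => σ (fw σ δ i j a) + δ (fw σ δ (i + 1) j a)

/-- Multiplication of the Ore extension `R[x;σ,δ]`, on coefficient sequences. -/
noncomputable def skewMul {R : Type*} [Ring R] (σ δ : R → R) (p q : ℕ →₀ R) : ℕ →₀ R :=
  p.sum fun j a => q.sum fun l b =>
    ∑ i ∈ Finset.range (j + 1), Finsupp.single (i + l) (a * fw σ δ i j b)

/-- The action of `R[x;σ,δ]` on the skew polynomial module `M[x;σ,δ]`, where `M` is a
right `R`-module (a module over `Rᵐᵒᵖ`): `(m x^j)·(b x^l) = Σ_{i≤j} (m·f_i^j(b)) x^{i+l}`. -/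
noncomputable def skewSMul {R : Type*} [Ring R] (σ δ : R → R) {M : Type*} [AddCommGroup M]
    [Module Rᵐᵒᵖ M] (m : ℕ →₀ M) (q : ℕ →₀ R) : ℕ →₀ M :=
  m.sum fun j mm => q.sum fun l b =>
    ∑ i ∈ Finset.range (j + 1), Finsupp.single (i + l) (op (fw σ δ i j b) • mm)

/-- A right `R`-module `M` is `(σ,δ)`-skew McCoy if whenever `m(x) g(x) = 0` in `M[x;σ,δ]`
with `g(x) ≠ 0`, there is a nonzero `a ∈ R` with `m(x) a = 0`. -/
def IsSkewMcCoy {R : Type*} [Ring R] (σ δ : R → R) (M : Type*) [AddCommGroup M]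
    [Module Rᵐᵒᵖ M] : Prop :=
  ∀ (m : ℕ →₀ M) (g : ℕ →₀ R), g ≠ 0 → skewSMul σ δ m g = 0 →
    ∃ a : R, a ≠ 0 ∧ skewSMul σ δ m (Finsupp.single 0 a) = 0

/-- A right `R`-module `M` is `(σ,δ)`-skew Armendariz if `m(x) g(x) = 0` implies
`(m_i x^i)(b_j x^j) = 0` for all `i, j`. -/
def IsSkewArmendariz {R : Type*} [Ring R] (σ δ : R → R) (M : Type*) [AddCommGroup M]
    [Module Rᵐᵒᵖ M] : Prop :=
  ∀ (m : ℕ →₀ M) (g : ℕ →₀ R), skewSMul σ δ m g = 0 →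
    ∀ i j, skewSMul σ δ (Finsupp.single i (m i)) (Finsupp.single j (g j)) = 0

/-- `σ`-compatibility of a right module: `m a = 0 ↔ m σ(a) = 0`. -/
def SigmaCompatible {R : Type*} [Ring R] (σ : R → R) (M : Type*) [AddCommGroup M]
    [Module Rᵐᵒᵖ M] : Prop :=
  ∀ (m : M) (a : R), op a • m = 0 ↔ op (σ a) • m = 0

/-- `δ`-compatibility of a right module: `m a = 0 → m δ(a) = 0`. -/
def DeltaCompatible {R : Type*} [Ring R] (δ : R → R) (M : Type*) [AddCommGroup M]
    [Module Rᵐᵒᵖ M] : Prop :=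
  ∀ (m : M) (a : R), op a • m = 0 → op (δ a) • m = 0

/-- A right module `M` is reduced if `m a = 0` implies `mR ∩ Ma = 0`. -/
def IsReducedModule {R : Type*} [Ring R] (M : Type*) [AddCommGroup M]
    [Module Rᵐᵒᵖ M] : Prop :=
  ∀ (m : M) (a : R), op a • m = 0 →
    ∀ x : M, (∃ r : R, op r • m = x) → (∃ m' : M, op a • m' = x) → x = 0

/-- Condition `(*)`: `m(x) f(x) = 0` implies `m(x) R f(x) = 0`. -/
def StarCondition {R : Type*} [Ring R] (σ δ : R → R) (M : Type*) [AddCommGroup M]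
    [Module Rᵐᵒᵖ M] : Prop :=
  ∀ (m : ℕ →₀ M) (f : ℕ →₀ R), skewSMul σ δ m f = 0 →
    ∀ r : R, skewSMul σ δ m (skewMul σ δ (Finsupp.single 0 r) f) = 0

section Aux
variable {R : Type*} [Ring R] {M : Type*} [AddCommGroup M] [Module Rᵐᵒᵖ M]

lemma op_mul_smul (a b : R) (m : M) : op (a * b) • m = op b • (op a • m) := by
  rw [op_mul, mul_smul]

lemma semicomm (hred : IsReducedModule (R := R) M) {a : R} {m : M}
    (h : op a • m = 0) (r : R) : op (r * a) • m = 0 := by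
  apply hred m a h
  · exact ⟨r * a, rfl⟩
  · exact ⟨op r • m, by rw [← op_mul_smul]⟩

lemma red_sq (hred : IsReducedModule (R := R) M) {a : R} {m : M}
    (h : op (a * a) • m = 0) : op a • m = 0 := by
  apply hred (op a • m) a (by rw [← op_mul_smul, h])
  · exact ⟨1, one_smul _ _⟩
  · exact ⟨m, rfl⟩

variable {σ δ : R → R}

lemma delta_zero (hδadd : ∀ a b : R, δ (a + b) = δ a + δ b) : δ 0 = 0 := by
  have := hδadd 0 0
  simpa using this.symm

lemma fw_zero (hσ0 : σ 0 = 0) (hδadd : ∀ a b : R, δ (a + b) = δ a + δ b) :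
    ∀ i j, fw σ δ i j 0 = 0 := by
  intro i j
  induction j generalizing i with
  | zero => cases i <;> simp [fw]
  | succ j ih =>
    cases i with
    | zero => simp [fw, ih, delta_zero hδadd]
    | succ i => simp [fw, ih, delta_zero hδadd, hσ0]

lemma fw_of_lt (hσ0 : σ 0 = 0) (hδ0 : δ 0 = 0) : ∀ {i j : ℕ}, j < i → ∀ a, fw σ δ i j a = 0 := by
  intro i j
  induction j generalizing i with
  | zero =>
    intro h a
    match i, h with
    | i + 1, _ => simp [fw]
  | succ j ih =>
    intro h a
    match i, h with
    | i + 1, h =>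
      have h1 : j < i := Nat.lt_of_succ_lt_succ h
      simp [fw, ih h1, ih (Nat.lt_succ_of_lt h1), hσ0, hδ0]

lemma compat_fw (hσ : SigmaCompatible σ M) (hδc : DeltaCompatible δ M)
    {a : R} {m : M} (h : op a • m = 0) : ∀ i j, op (fw σ δ i j a) • m = 0 := by
  intro i j
  induction j generalizing i with
  | zero =>
    cases i with
    | zero => simpa [fw] using h
    | succ i => simp [fw]
  | succ j ih =>
    cases i with
    | zero => exact hδc m _ (ih 0)
    | succ i =>
      have h1 : op (σ (fw σ δ i j a)) • m = 0 := (hσ m _).mp (ih i)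
      have h2 : op (δ (fw σ δ (i + 1) j a)) • m = 0 := hδc m _ (ih (i + 1))
      show op (σ (fw σ δ i j a) + δ (fw σ δ (i + 1) j a)) • m = 0
      rw [op_add, add_smul, h1, h2, add_zero]

lemma compat_diag (hσ : SigmaCompatible σ M) (hσ0 : σ 0 = 0)
    (hδadd : ∀ a b : R, δ (a + b) = δ a + δ b)
    {a : R} {m : M} : ∀ j, (op (fw σ δ j j a) • m = 0 ↔ op a • m = 0) := by
  intro j
  induction j with
  | zero => simp [fw]
  | succ j ih =>
    have : fw σ δ (j + 1) (j + 1) a = σ (fw σ δ j j a) := by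
      show σ (fw σ δ j j a) + δ (fw σ δ (j + 1) j a) = _
      rw [fw_of_lt hσ0 (delta_zero hδadd) (Nat.lt_succ_self j), delta_zero hδadd, add_zero]
    rw [this, ← hσ, ih]

lemma inner_lemma (hred : IsReducedModule (R := R) M) (c : ℕ → R) (mv : ℕ → M) (t : ℕ)
    (hsum : ∑ j ∈ Finset.range (t + 1), op (c j) • mv j = 0)
    (hup : ∀ j' j, j' < j → j ≤ t → op (c j') • mv j = 0) :
    ∀ j, j ≤ t → op (c j) • mv j = 0 := by
  intro j
  induction j using Nat.strong_induction_on with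
  | _ j IH =>
  intro hj
  have h0 : op (c j) • (∑ j'' ∈ Finset.range (t + 1), op (c j'') • mv j'') = 0 := by
    rw [hsum, smul_zero]
  rw [Finset.smul_sum] at h0
  have h1 : ∀ j'' ∈ Finset.range (t + 1), j'' ≠ j → op (c j) • (op (c j'') • mv j'') = 0 := by
    intro j'' hmem hne
    rcases lt_or_gt_of_ne hne with hlt | hgt
    · rw [IH j'' hlt (le_trans (le_of_lt hlt) hj), smul_zero]
    · rw [← op_mul_smul]
      exact semicomm hred (hup j j'' hgt (Nat.lt_succ_iff.mp (Finset.mem_range.mp hmem))) (c j'')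
  rw [Finset.sum_eq_single_of_mem j (Finset.mem_range.mpr (Nat.lt_succ_of_le hj)) h1] at h0
  rw [← op_mul_smul] at h0
  exact red_sq hred h0

lemma skewSMul_apply (σ δ : R → R) (m : ℕ →₀ M) (q : ℕ →₀ R) (k : ℕ) :
    skewSMul σ δ m q k = ∑ j ∈ m.support, ∑ l ∈ q.support, ∑ i ∈ Finset.range (j + 1),
      (if i + l = k then op (fw σ δ i j (q l)) • m j else 0) := by
  unfold skewSMul
  simp only [Finsupp.sum_apply, Finsupp.finset_sum_apply, Finsupp.single_apply, Finsupp.sum]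

lemma skewSMul_eqn (hσ0 : σ 0 = 0) (hδadd : ∀ a b : R, δ (a + b) = δ a + δ b)
    (m : ℕ →₀ M) (f : ℕ →₀ R) (N : ℕ)
    (hm : ∀ j, N ≤ j → m j = 0) (hf : ∀ l, N ≤ l → f l = 0)
    (h : skewSMul σ δ m f = 0) (k : ℕ) :
    ∑ j ∈ Finset.range N, ∑ l ∈ Finset.range N, ∑ i ∈ Finset.range (j + 1),
      (if i + l = k then op (fw σ δ i j (f l)) • m j else 0) = 0 := by
  have hms : m.support ⊆ Finset.range N := by
    intro j hj
    rw [Finset.mem_range]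
    by_contra hc
    exact Finsupp.mem_support_iff.mp hj (hm j (le_of_not_gt hc))
  have hfs : f.support ⊆ Finset.range N := by
    intro l hl
    rw [Finset.mem_range]
    by_contra hc
    exact Finsupp.mem_support_iff.mp hl (hf l (le_of_not_gt hc))
  have key : skewSMul σ δ m f k = 0 := by rw [h]; rfl
  rw [skewSMul_apply] at key
  calc ∑ j ∈ Finset.range N, ∑ l ∈ Finset.range N, ∑ i ∈ Finset.range (j + 1),
        (if i + l = k then op (fw σ δ i j (f l)) • m j else 0)
      = ∑ j ∈ m.support, ∑ l ∈ Finset.range N, ∑ i ∈ Finset.range (j + 1),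
        (if i + l = k then op (fw σ δ i j (f l)) • m j else 0) := by
        refine (Finset.sum_subset hms fun j _ hj => ?_).symm
        have hmj : m j = 0 := Finsupp.notMem_support_iff.mp hj
        simp [hmj]
    _ = ∑ j ∈ m.support, ∑ l ∈ f.support, ∑ i ∈ Finset.range (j + 1),
        (if i + l = k then op (fw σ δ i j (f l)) • m j else 0) := by
        refine Finset.sum_congr rfl fun j _ => ?_
        refine (Finset.sum_subset hfs fun l _ hl => ?_).symm
        have hfl : f l = 0 := Finsupp.notMem_support_iff.mp hl
        simp [hfl, fw_zero hσ0 hδadd]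
    _ = 0 := key

lemma step_lemma (hred : IsReducedModule (R := R) M)
    (hσ : SigmaCompatible σ M) (hδc : DeltaCompatible δ M)
    (hσ0 : σ 0 = 0) (hδadd : ∀ a b : R, δ (a + b) = δ a + δ b)
    (m : ℕ →₀ M) (f : ℕ →₀ R) (N : ℕ)
    (hm : ∀ j, N ≤ j → m j = 0) (hf : ∀ l, N ≤ l → f l = 0)
    (h : skewSMul σ δ m f = 0) (t : ℕ)
    (H : ∀ j l, t + 1 ≤ j + l → op (f l) • m j = 0) :
    ∀ j l, t ≤ j + l → op (f l) • m j = 0 := by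
  have hkey := skewSMul_eqn hσ0 hδadd m f N hm hf h t
  -- Step A: collapse the inner i-sum to the diagonal i = j
  have hA : ∑ j ∈ Finset.range N, ∑ l ∈ Finset.range N,
      (if j + l = t then op (fw σ δ j j (f l)) • m j else 0) = 0 := by
    refine Eq.trans ?_ hkey
    refine Finset.sum_congr rfl fun j _ => ?_
    refine Finset.sum_congr rfl fun l _ => ?_
    symm
    apply Finset.sum_eq_single_of_mem j (Finset.mem_range.mpr (Nat.lt_succ_self j))
    intro i hi hne
    have hij : i < j := lt_of_le_of_ne (Nat.lt_succ_iff.mp (Finset.mem_range.mp hi)) hne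
    by_cases hc : i + l = t
    · rw [if_pos hc]
      have : t + 1 ≤ j + l := by omega
      exact compat_fw hσ hδc (H j l this) i j
    · rw [if_neg hc]
  -- Step B: extend ranges to N' and collapse the l-sum
  set N' := max N (t + 1) with hN'
  have hsubN : Finset.range N ⊆ Finset.range N' := Finset.range_subset_range.mpr (le_max_left _ _)
  have hsubT : Finset.range (t + 1) ⊆ Finset.range N' :=
    Finset.range_subset_range.mpr (le_max_right _ _)
  have hB : ∑ j ∈ Finset.range N', ∑ l ∈ Finset.range N',
      (if j + l = t then op (fw σ δ j j (f l)) • m j else 0) = 0 := by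
    calc ∑ j ∈ Finset.range N', ∑ l ∈ Finset.range N',
          (if j + l = t then op (fw σ δ j j (f l)) • m j else 0)
        = ∑ j ∈ Finset.range N', ∑ l ∈ Finset.range N,
          (if j + l = t then op (fw σ δ j j (f l)) • m j else 0) := by
          refine Finset.sum_congr rfl fun j _ => ?_
          refine (Finset.sum_subset hsubN fun l _ hl => ?_).symm
          have hNl : N ≤ l := le_of_not_gt (fun hc => hl (Finset.mem_range.mpr hc))
          simp [hf l hNl, fw_zero hσ0 hδadd]
      _ = ∑ j ∈ Finset.range N, ∑ l ∈ Finset.range N,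
          (if j + l = t then op (fw σ δ j j (f l)) • m j else 0) := by
          refine (Finset.sum_subset hsubN fun j _ hj => ?_).symm
          have hNj : N ≤ j := le_of_not_gt (fun hc => hj (Finset.mem_range.mpr hc))
          simp [hm j hNj]
      _ = 0 := hA
  have hC : ∑ j ∈ Finset.range (t + 1), op (fw σ δ j j (f (t - j))) • m j = 0 := by
    have hCinner : ∀ j ∈ Finset.range N', ∑ l ∈ Finset.range N',
        (if j + l = t then op (fw σ δ j j (f l)) • m j else 0)
        = (if j < t + 1 then op (fw σ δ j j (f (t - j))) • m j else 0) := by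
      intro j _
      by_cases hjt : j < t + 1
      · rw [if_pos hjt]
        have hmem : t - j ∈ Finset.range N' := hsubT (Finset.mem_range.mpr (by omega))
        rw [Finset.sum_eq_single_of_mem (t - j) hmem fun l _ hne => if_neg (by omega)]
        rw [if_pos (by omega)]
      · rw [if_neg hjt]
        exact Finset.sum_eq_zero fun l _ => if_neg (by omega)
    calc ∑ j ∈ Finset.range (t + 1), op (fw σ δ j j (f (t - j))) • m j
        = ∑ j ∈ Finset.range (t + 1),
            (if j < t + 1 then op (fw σ δ j j (f (t - j))) • m j else 0) := by
          refine Finset.sum_congr rfl fun j hj => ?_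
          rw [if_pos (Finset.mem_range.mp hj)]
      _ = ∑ j ∈ Finset.range N',
            (if j < t + 1 then op (fw σ δ j j (f (t - j))) • m j else 0) := by
          refine Finset.sum_subset hsubT fun j _ hj => ?_
          exact if_neg (fun hc => hj (Finset.mem_range.mpr hc))
      _ = ∑ j ∈ Finset.range N', ∑ l ∈ Finset.range N',
            (if j + l = t then op (fw σ δ j j (f l)) • m j else 0) :=
          (Finset.sum_congr rfl hCinner).symm
      _ = 0 := hB
  -- apply the inner lemma
  have hinner := inner_lemma hred (fun j' => fw σ δ j' j' (f (t - j'))) (fun j => m j) t hC ?_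
  · intro j l hjl
    rcases Nat.lt_or_ge (j + l) (t + 1) with hlt | hge
    · have hjt : j + l = t := by omega
      have hjle : j ≤ t := by omega
      have := (compat_diag hσ hσ0 hδadd j).mp (hinner j hjle)
      have hl : t - j = l := by omega
      rwa [hl] at this
    · exact H j l hge
  · intro j' j hj' hjt
    have : op (f (t - j')) • m j = 0 := H j (t - j') (by omega)
    exact (compat_diag hσ hσ0 hδadd j').mpr this

lemma armendariz (hred : IsReducedModule (R := R) M)
    (hσ : SigmaCompatible σ M) (hδc : DeltaCompatible δ M)
    (hσ0 : σ 0 = 0) (hδadd : ∀ a b : R, δ (a + b) = δ a + δ b)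
    (m : ℕ →₀ M) (f : ℕ →₀ R) (h : skewSMul σ δ m f = 0) :
    ∀ j l, op (f l) • m j = 0 := by
  obtain ⟨N, hm, hf⟩ : ∃ N : ℕ, (∀ j, N ≤ j → m j = 0) ∧ (∀ l, N ≤ l → f l = 0) := by
    refine ⟨max (m.support.sup id) (f.support.sup id) + 1, fun j hj => ?_, fun l hl => ?_⟩
    · by_contra hc
      have := Finset.le_sup (f := id) (Finsupp.mem_support_iff.mpr hc)
      simp only [id] at this
      omega
    · by_contra hc
      have := Finset.le_sup (f := id) (Finsupp.mem_support_iff.mpr hc)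
      simp only [id] at this
      omega
  have main : ∀ d, ∀ j l, 2 * N - d ≤ j + l → op (f l) • m j = 0 := by
    intro d
    induction d with
    | zero =>
      intro j l hjl
      rcases Nat.lt_or_ge j N with hj | hj
      · have hl : N ≤ l := by omega
        rw [hf l hl]
        simp
      · rw [hm j hj, smul_zero]
    | succ d ih =>
      rcases Nat.lt_or_ge d (2 * N) with hd | hd
      · refine step_lemma hred hσ hδc hσ0 hδadd m f N hm hf h (2 * N - (d + 1)) ?_
        intro j l hjl
        exact ih j l (by omega)
      · intro j l hjl
        exact ih j l (by omega)
  intro j l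
  exact main (2 * N) j l (by omega)

lemma skewSMul_eq_zero_of (σ δ : R → R) (hσ : SigmaCompatible σ M) (hδc : DeltaCompatible δ M)
    (m : ℕ →₀ M) (g : ℕ →₀ R) (h : ∀ j l, op (g l) • m j = 0) : skewSMul σ δ m g = 0 := by
  unfold skewSMul Finsupp.sum
  refine Finset.sum_eq_zero fun j _ => ?_
  refine Finset.sum_eq_zero fun l _ => ?_
  refine Finset.sum_eq_zero fun i _ => ?_
  rw [compat_fw hσ hδc (h j l) i j, Finsupp.single_zero]

lemma skewMul_single_zero_apply (σ δ : R → R) (hσ0 : σ 0 = 0)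
    (hδadd : ∀ a b : R, δ (a + b) = δ a + δ b) (r : R) (f : ℕ →₀ R) (l : ℕ) :
    skewMul σ δ (Finsupp.single 0 r) f l = r * f l := by
  unfold skewMul
  rw [Finsupp.sum_single_index (by simp [Finsupp.sum])]
  rw [Finsupp.sum_apply]
  unfold Finsupp.sum
  have : ∀ l' ∈ f.support,
      (∑ i ∈ Finset.range (0 + 1), Finsupp.single (i + l') (r * fw σ δ i 0 (f l'))) l
      = if l' = l then r * f l' else 0 := by
    intro l' _
    rw [Finset.sum_range_one, Finsupp.single_apply]
    simp only [zero_add]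
    show (if l' = l then r * fw σ δ 0 0 (f l') else 0) = _
    simp [fw]
  rw [Finset.sum_congr rfl this, Finset.sum_ite_eq' f.support l (fun l' => r * f l')]
  by_cases hc : l ∈ f.support
  · rw [if_pos hc]
  · rw [if_neg hc, Finsupp.notMem_support_iff.mp hc, mul_zero]

end Aux

/-- If a module `M_R` is `(σ,δ)`-compatible and reduced, then it satisfies condition `(*)`:
`m(x) f(x) = 0` implies `m(x) r f(x) = 0` for all `r ∈ R`. -/
theorem compatible_reduced_star {R : Type*} [Ring R] (σ : R →+* R) (δ : R → R)
    (hδadd : ∀ a b : R, δ (a + b) = δ a + δ b)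
    (hδmul : ∀ a b : R, δ (a * b) = σ a * δ b + δ a * b)
    (M : Type*) [AddCommGroup M] [Module Rᵐᵒᵖ M]
    (hred : IsReducedModule (R := R) M)
    (hσ : SigmaCompatible ⇑σ M) (hδc : DeltaCompatible δ M) :
    StarCondition ⇑σ δ M := by
  intro m f h r
  have harm := armendariz hred hσ hδc (map_zero σ) hδadd m f h
  refine skewSMul_eq_zero_of _ _ hσ hδc _ _ fun j l => ?_
  rw [skewMul_single_zero_apply _ _ (map_zero σ) hδadd]
  exact semicomm hred (harm j l) r
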